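/- arXiv:2108.07036 — 5 statements merged into one kernel-verified Lean document; each statement's English description precedes it below -/
import Mathlib

section
/- If p : ℝ → ℝ is a differentiable, nonnegative function satisfying p'(x) + ((1-e^{-x})/(1+e^{-x}))p(x) = 0 for all x ∈ ℝ and ∫_{-∞}^{∞} p(x) dx = 1, then p(x) = e^{-x}/(1+e^{-x})^2 for all x. -/
open Real MeasureTheory Filter Topology

lemma logistic_w_hasDerivAt (x : ℝ) :
    HasDerivAt (fun x => Real.exp x * (1 + Real.exp (-x))^2)
      (Real.exp x * (1 + Real.exp (-x))^2
        + Real.exp x * (2 * (1 + Real.exp (-x)) * (-Real.exp (-x)))) x := by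
  have hinner : HasDerivAt (fun x : ℝ => Real.exp (-x)) (-Real.exp (-x)) x := by
    simpa [Function.comp_def] using (Real.hasDerivAt_exp (-x)).comp x (hasDerivAt_neg x)
  have h2 : HasDerivAt (fun x : ℝ => (1 + Real.exp (-x))^2)
      (2 * (1 + Real.exp (-x)) * (-Real.exp (-x))) x := by
    have := ((hasDerivAt_const x (1:ℝ)).fun_add hinner).fun_pow 2
    simpa [mul_comm, mul_assoc, mul_left_comm] using this
  simpa using (Real.hasDerivAt_exp x).fun_mul h2

lemma sigmoid_hasDerivAt (x : ℝ) :
    HasDerivAt (fun x : ℝ => (1 + Real.exp (-x))⁻¹)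
      (Real.exp (-x) / (1 + Real.exp (-x))^2) x := by
  have hpos : (0:ℝ) < 1 + Real.exp (-x) := by positivity
  have hinner : HasDerivAt (fun x : ℝ => 1 + Real.exp (-x)) (-Real.exp (-x)) x := by
    have : HasDerivAt (fun x : ℝ => Real.exp (-x)) (-Real.exp (-x)) x := by
      simpa [Function.comp_def] using (Real.hasDerivAt_exp (-x)).comp x (hasDerivAt_neg x)
    simpa using (hasDerivAt_const x (1:ℝ)).fun_add this
  have := hinner.inv hpos.ne'
  refine this.congr_deriv ?_
  field_simp

theorem logistic_density_unique (p : ℝ → ℝ)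
    (hdiff : Differentiable ℝ p) (hpos : ∀ x, 0 ≤ p x)
    (hode : ∀ x, deriv p x + ((1 - Real.exp (-x)) / (1 + Real.exp (-x))) * p x = 0)
    (hint : ∫ x : ℝ, p x = 1) :
    ∀ x, p x = Real.exp (-x) / (1 + Real.exp (-x))^2 := by
  set L : ℝ → ℝ := fun x => Real.exp (-x) / (1 + Real.exp (-x))^2 with hL
  set q : ℝ → ℝ := fun x => p x * (Real.exp x * (1 + Real.exp (-x))^2) with hq
  have hqderiv : ∀ x, HasDerivAt q 0 x := by
    intro x
    have hp : HasDerivAt p (deriv p x) x := (hdiff x).hasDerivAt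
    have h := hp.fun_mul (logistic_w_hasDerivAt x)
    have hne : (1:ℝ) + Real.exp (-x) ≠ 0 := by positivity
    have hd : deriv p x = -((1 - Real.exp (-x)) / (1 + Real.exp (-x))) * p x := by
      linarith [hode x]
    refine h.congr_deriv ?_
    rw [hd]
    field_simp
    ring
  have hqdiff : Differentiable ℝ q := fun x => (hqderiv x).differentiableAt
  have hqconst : ∀ x, q x = q 0 := by
    intro x
    exact is_const_of_deriv_eq_zero hqdiff (fun y => (hqderiv y).deriv) x 0
  set c : ℝ := q 0 with hc
  have hwpos : ∀ x : ℝ, 0 < Real.exp x * (1 + Real.exp (-x))^2 := by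
    intro x; positivity
  have hpL : ∀ x, p x = c * L x := by
    intro x
    have := hqconst x
    have hne := (hwpos x).ne'
    rw [hq] at this
    simp only [hL]
    have hxx : Real.exp x * Real.exp (-x) = 1 := by
      rw [← Real.exp_add]; simp
    field_simp at this ⊢
    linear_combination Real.exp (-x) * this - p x * (1 + Real.exp (-x))^2 * hxx
  have hpint : Integrable p := by
    by_contra h
    rw [integral_undef h] at hint
    norm_num at hint
  have hcne : c ≠ 0 := by
    intro h0
    have : ∀ x, p x = 0 := by intro x; rw [hpL x, h0, zero_mul]
    rw [show p = fun _ => (0:ℝ) from funext this] at hint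
    simp at hint
  have hLint : Integrable L := by
    have : L = fun x => c⁻¹ * p x := by
      funext x; rw [hpL x]; field_simp
    rw [this]
    exact hpint.const_mul _
  have hIL : ∫ x : ℝ, L x = 1 := by
    have htop : Tendsto (fun x : ℝ => (1 + Real.exp (-x))⁻¹) atTop (𝓝 1) := by
      have : Tendsto (fun x : ℝ => 1 + Real.exp (-x)) atTop (𝓝 1) := by
        have h1 : Tendsto (fun x : ℝ => Real.exp (-x)) atTop (𝓝 0) :=
          Real.tendsto_exp_atBot.comp tendsto_neg_atTop_atBot
        simpa using tendsto_const_nhds.add h1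
      simpa using this.inv₀ (by norm_num)
    have hbot : Tendsto (fun x : ℝ => (1 + Real.exp (-x))⁻¹) atBot (𝓝 0) := by
      have : Tendsto (fun x : ℝ => 1 + Real.exp (-x)) atBot atTop := by
        have h1 : Tendsto (fun x : ℝ => Real.exp (-x)) atBot atTop :=
          Real.tendsto_exp_atTop.comp tendsto_neg_atBot_atTop
        exact tendsto_atTop_add_const_left _ 1 h1
      exact this.inv_tendsto_atTop
    have := integral_of_hasDerivAt_of_tendsto (f := fun x : ℝ => (1 + Real.exp (-x))⁻¹)
      (f' := L) (fun x => sigmoid_hasDerivAt x) hLint hbot htop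
    simpa using this
  have hc1 : c = 1 := by
    have : ∫ x : ℝ, p x = c * ∫ x : ℝ, L x := by
      rw [show p = fun x => c * L x from funext hpL]
      exact integral_const_mul c L
    rw [hint, hIL, mul_one] at this
    exact this.symm
  intro x
  rw [hpL x, hc1, one_mul]
end

section
/- If X is a random variable with the standard logistic distribution (density p(x) = e^{-x}/(1+e^{-x})^2), then for every t ∈ ℝ, E[(i t − (1−e^{−X})/(1+e^{−X}))·e^{i t X}] = 0. -/
open MeasureTheory Real Set

lemma integrable_exp_neg_abs' : Integrable (fun x : ℝ => Real.exp (-|x|)) := by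
  have h1 : IntegrableOn (fun x : ℝ => Real.exp (-|x|)) (Iic 0) := by
    refine (integrableOn_exp_Iic 0).congr_fun (fun x hx => ?_) measurableSet_Iic
    rw [abs_of_nonpos (by exact hx), neg_neg]
  have h2 : IntegrableOn (fun x : ℝ => Real.exp (-|x|)) (Ioi 0) := by
    refine (exp_neg_integrableOn_Ioi 0 one_pos).congr_fun (fun x hx => ?_) measurableSet_Ioi
    rw [abs_of_pos (by exact hx)]; ring_nf
  rw [← integrableOn_univ, ← Iic_union_Ioi (a := (0:ℝ))]
  exact h1.union h2

lemma logistic_pdf_le (x : ℝ) :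
    Real.exp (-x) / (1 + Real.exp (-x))^2 ≤ Real.exp (-|x|) := by
  have hu : 0 < Real.exp (-x) := Real.exp_pos _
  rcases le_or_gt 0 x with hx | hx
  · rw [abs_of_nonneg hx]
    calc Real.exp (-x) / (1 + Real.exp (-x))^2 ≤ Real.exp (-x) / 1 := by
          apply div_le_div_of_nonneg_left hu.le one_pos
          nlinarith
      _ = Real.exp (-x) := div_one _
  · rw [abs_of_neg hx, neg_neg]
    have hxx : Real.exp x * Real.exp (-x) = 1 := by rw [← Real.exp_add]; simp
    rw [div_le_iff₀ (by positivity)]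
    nlinarith [Real.exp_pos x, sq_nonneg (Real.exp (-x))]

theorem logistic_stein_identity (t : ℝ) :
    ∫ x : ℝ, (Complex.I * t - (((1 - Real.exp (-x)) / (1 + Real.exp (-x)) : ℝ) : ℂ)) *
        Complex.exp (Complex.I * t * x) *
        ((Real.exp (-x) / (1 + Real.exp (-x))^2 : ℝ) : ℂ) = 0 := by
  set g : ℝ → ℂ := fun x => Complex.exp (Complex.I * t * x) *
      ((Real.exp (-x) / (1 + Real.exp (-x))^2 : ℝ) : ℂ) with hg
  set F : ℝ → ℂ := fun x => (Complex.I * t - (((1 - Real.exp (-x)) / (1 + Real.exp (-x)) : ℝ) : ℂ)) *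
        Complex.exp (Complex.I * t * x) *
        ((Real.exp (-x) / (1 + Real.exp (-x))^2 : ℝ) : ℂ) with hF
  have hne : ∀ x : ℝ, (1 : ℝ) + Real.exp (-x) ≠ 0 := fun x => by positivity
  have hderiv : ∀ x : ℝ, HasDerivAt g (F x) x := by
    intro x
    have h1 : HasDerivAt (fun y : ℝ => Complex.exp (Complex.I * t * y))
        (Complex.I * t * Complex.exp (Complex.I * t * x)) x := by
      have := (((hasDerivAt_id x).ofReal_comp).const_mul (Complex.I * t)).cexp
      simpa [mul_comm] using this
    have h2 : HasDerivAt (fun y : ℝ => Real.exp (-y) / (1 + Real.exp (-y))^2)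
        ((Real.exp (-x) * (Real.exp (-x) - 1)) / (1 + Real.exp (-x))^3) x := by
      have hn : HasDerivAt (fun y : ℝ => Real.exp (-y)) (-Real.exp (-x)) x := by
        simpa using (hasDerivAt_neg x).exp
      have hd : HasDerivAt (fun y : ℝ => (1 + Real.exp (-y))^2)
          (2 * (1 + Real.exp (-x)) * (-Real.exp (-x))) x := by
        simpa using ((hasDerivAt_const x (1:ℝ)).fun_add hn).fun_pow 2
      have := hn.div hd (pow_ne_zero 2 (hne x))
      refine this.congr_deriv ?_
      field_simp
      ring
    have := h1.mul (h2.ofReal_comp)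
    refine this.congr_deriv ?_
    rw [hF]
    have h0 : ((1 : ℂ) + Complex.exp (-(x:ℂ))) ≠ 0 := by
      rw [show (-(x:ℂ)) = ((-x : ℝ) : ℂ) by push_cast; ring, ← Complex.ofReal_exp,
        ← Complex.ofReal_one, ← Complex.ofReal_add]
      exact_mod_cast hne x
    push_cast
    field_simp
    ring
  have hbound : ∀ x : ℝ, ‖F x‖ ≤ (|t| + 1) * Real.exp (-|x|) := by
    intro x
    have hu : 0 < Real.exp (-x) := Real.exp_pos _
    have hq : |(1 - Real.exp (-x)) / (1 + Real.exp (-x))| ≤ 1 := by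
      rw [abs_div, abs_of_pos (by positivity : (0:ℝ) < 1 + Real.exp (-x)),
        div_le_one (by positivity)]
      rw [abs_le]; constructor <;> nlinarith
    have hp : 0 ≤ Real.exp (-x) / (1 + Real.exp (-x))^2 := by positivity
    rw [hF]
    simp only [norm_mul, Complex.norm_exp]
    have hre : (Complex.I * t * x).re = 0 := by simp
    rw [hre, Real.exp_zero, mul_one, Complex.norm_real, Real.norm_eq_abs, abs_of_nonneg hp]
    have h1 : ‖(Complex.I * t - (((1 - Real.exp (-x)) / (1 + Real.exp (-x)) : ℝ) : ℂ))‖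
        ≤ |t| + 1 := by
      refine (norm_sub_le _ _).trans ?_
      gcongr
      · simp
      · rw [Complex.norm_real, Real.norm_eq_abs]; exact hq
    exact mul_le_mul h1 (logistic_pdf_le x) hp (by positivity)
  have hmeasF : AEStronglyMeasurable F volume := by
    apply Measurable.aestronglyMeasurable
    rw [hF]
    fun_prop
  have hintF : Integrable F := by
    refine Integrable.mono' ((integrable_exp_neg_abs'.const_mul (|t| + 1))) hmeasF ?_
    filter_upwards with x using hbound x
  have hintg : Integrable g := by
    have hmg : AEStronglyMeasurable g volume := by
      apply Measurable.aestronglyMeasurable; rw [hg]; fun_prop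
    refine Integrable.mono' integrable_exp_neg_abs' hmg ?_
    filter_upwards with x
    rw [hg]
    simp only [norm_mul, Complex.norm_exp]
    have hre : (Complex.I * t * x).re = 0 := by simp
    rw [hre, Real.exp_zero, one_mul, Complex.norm_real, Real.norm_eq_abs,
      abs_of_nonneg (by positivity : (0:ℝ) ≤ Real.exp (-x) / (1 + Real.exp (-x))^2)]
    exact logistic_pdf_le x
  exact integral_eq_zero_of_hasDerivAt_of_integrable hderiv hintF hintg
end

section
/- For X with standard logistic density, E[|X|·e^{-X}/(1+e^{-X})^2] = (log 2)/3 − 1/12; equivalently, ∫_{-∞}^{∞} |x|·e^{-2x}/(1+e^{-x})^4 dx = (log 2)/3 − 1/12. -/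
open Real MeasureTheory Set Filter Topology

private noncomputable def Faux (x : ℝ) : ℝ :=
  x * (-(Real.exp (-x) ^ 2 * (3 + Real.exp (-x))) / (6 * (1 + Real.exp (-x)) ^ 3))
    - Real.log (1 + Real.exp (-x)) / 6 + (1 + Real.exp (-x))⁻¹ / 6
    - ((1 + Real.exp (-x))⁻¹) ^ 2 / 6

private lemma Faux_hasDerivAt (x : ℝ) :
    HasDerivAt Faux (x * Real.exp (-2*x) / (1 + Real.exp (-x))^4) x := by
  have hu : HasDerivAt (fun x : ℝ => Real.exp (-x)) (-Real.exp (-x)) x := by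
    simpa using (hasDerivAt_neg x).exp
  have hDpos : (0:ℝ) < 1 + Real.exp (-x) := by positivity
  have hDne : (1:ℝ) + Real.exp (-x) ≠ 0 := ne_of_gt hDpos
  have hD : HasDerivAt (fun x : ℝ => 1 + Real.exp (-x)) (-Real.exp (-x)) x := by
    exact ((hasDerivAt_const x (1:ℝ)).add hu).congr_deriv (by ring)
  -- numerator of t1
  have hN : HasDerivAt (fun x : ℝ => -(Real.exp (-x) ^ 2 * (3 + Real.exp (-x))))
      (-((2 * Real.exp (-x) ^ 1 * (-Real.exp (-x))) * (3 + Real.exp (-x))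
        + Real.exp (-x) ^ 2 * (-Real.exp (-x)))) x := by
    exact ((hu.pow 2).mul ((hasDerivAt_const x (3:ℝ)).add hu)).neg.congr_deriv (by simp only [Pi.add_apply, Pi.pow_apply]; push_cast; ring)
  have hDen : HasDerivAt (fun x : ℝ => 6 * (1 + Real.exp (-x)) ^ 3)
      (6 * (3 * (1 + Real.exp (-x)) ^ 2 * (-Real.exp (-x)))) x :=
    (hD.pow 3).const_mul 6
  have hDen_ne : 6 * (1 + Real.exp (-x)) ^ 3 ≠ 0 := by positivity
  have hfrac := hN.div hDen hDen_ne
  have ht1 := (hasDerivAt_id x).mul hfrac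
  have ht2 : HasDerivAt (fun x : ℝ => Real.log (1 + Real.exp (-x)) / 6)
      ((-Real.exp (-x)) / (1 + Real.exp (-x)) / 6) x := (hD.log hDne).div_const 6
  have ht3 : HasDerivAt (fun x : ℝ => (1 + Real.exp (-x))⁻¹ / 6)
      (-(-Real.exp (-x)) / (1 + Real.exp (-x)) ^ 2 / 6) x := (hD.inv hDne).div_const 6
  have ht4 : HasDerivAt (fun x : ℝ => ((1 + Real.exp (-x))⁻¹) ^ 2 / 6)
      ((2 * ((1 + Real.exp (-x))⁻¹) ^ 1 * (-(-Real.exp (-x)) / (1 + Real.exp (-x)) ^ 2)) / 6) x :=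
    ((hD.inv hDne).pow 2).div_const 6
  have hF := ((ht1.sub ht2).add ht3).sub ht4
  refine hF.congr_deriv ?_
  have hexp2 : Real.exp (-2*x) = Real.exp (-x) * Real.exp (-x) := by
    rw [← Real.exp_add]; ring_nf
  rw [hexp2]
  simp only [Pi.div_apply, Pi.mul_apply, id]
  field_simp
  ring

private lemma Faux_tendsto : Tendsto Faux atTop (𝓝 0) := by
  have hu : Tendsto (fun x : ℝ => Real.exp (-x)) atTop (𝓝 0) := by
    simpa using Real.tendsto_exp_neg_atTop_nhds_zero
  have hxu : Tendsto (fun x : ℝ => x * Real.exp (-x)) atTop (𝓝 0) := by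
    simpa using Real.tendsto_pow_mul_exp_neg_atTop_nhds_zero 1
  have hD : Tendsto (fun x : ℝ => 1 + Real.exp (-x)) atTop (𝓝 1) := by
    simpa using tendsto_const_nhds.add hu
  have ht1 : Tendsto (fun x : ℝ =>
      x * (-(Real.exp (-x) ^ 2 * (3 + Real.exp (-x))) / (6 * (1 + Real.exp (-x)) ^ 3)))
      atTop (𝓝 0) := by
    have heq : ∀ x : ℝ, x * (-(Real.exp (-x) ^ 2 * (3 + Real.exp (-x)))
        / (6 * (1 + Real.exp (-x)) ^ 3))
        = (x * Real.exp (-x)) * Real.exp (-x)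
          * (-(3 + Real.exp (-x)) / (6 * (1 + Real.exp (-x)) ^ 3)) := by
      intro x
      have : (0:ℝ) < 1 + Real.exp (-x) := by positivity
      field_simp
    simp_rw [heq]
    have hlim : Tendsto (fun x : ℝ =>
        -(3 + Real.exp (-x)) / (6 * (1 + Real.exp (-x)) ^ 3)) atTop
        (𝓝 (-(3 + 0) / (6 * (1 + 0) ^ 3))) := by
      apply Tendsto.div
      · exact (tendsto_const_nhds.add hu).neg
      · exact ((tendsto_const_nhds.add hu).pow 3).const_mul 6
      · norm_num
    have := (hxu.mul hu).mul hlim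
    simpa using this
  have ht2 : Tendsto (fun x : ℝ => Real.log (1 + Real.exp (-x)) / 6) atTop (𝓝 0) := by
    have : Tendsto (fun x : ℝ => Real.log (1 + Real.exp (-x))) atTop (𝓝 (Real.log 1)) :=
      ((Real.continuousAt_log (by norm_num)).tendsto).comp hD
    simpa using this.div_const 6
  have ht3 : Tendsto (fun x : ℝ => (1 + Real.exp (-x))⁻¹ / 6) atTop (𝓝 ((1:ℝ)⁻¹ / 6)) :=
    (hD.inv₀ (by norm_num)).div_const 6
  have ht4 : Tendsto (fun x : ℝ => ((1 + Real.exp (-x))⁻¹) ^ 2 / 6) atTop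
      (𝓝 (((1:ℝ)⁻¹) ^ 2 / 6)) := ((hD.inv₀ (by norm_num)).pow 2).div_const 6
  have := ((ht1.sub ht2).add ht3).sub ht4
  have h0 : (0:ℝ) - 0 + (1:ℝ)⁻¹ / 6 - ((1:ℝ)⁻¹) ^ 2 / 6 = 0 := by norm_num
  rw [h0] at this
  exact this

private lemma key : ∫ x in Ioi (0:ℝ), x * Real.exp (-2*x) / (1 + Real.exp (-x))^4
    = Real.log 2 / 6 - 1/24 := by
  have := integral_Ioi_of_hasDerivAt_of_nonneg' (a := 0)
    (g := Faux) (g' := fun x => x * Real.exp (-2*x) / (1 + Real.exp (-x))^4)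
    (fun x _ => Faux_hasDerivAt x)
    (fun x hx => by
      have hx0 : (0:ℝ) < x := hx
      have h1 : (0:ℝ) < (1 + Real.exp (-x))^4 := by positivity
      positivity)
    Faux_tendsto
  rw [this]
  have : Faux 0 = -(Real.log 2 / 6) + 1/12 - 1/24 := by
    simp only [Faux, Real.exp_zero, neg_zero]
    norm_num
  rw [this]
  ring

theorem logistic_abs_moment_one :
    ∫ x : ℝ, |x| * Real.exp (-2*x) / (1 + Real.exp (-x))^4 = Real.log 2 / 3 - 1/12 := by
  have heven : ∀ x : ℝ, |x| * Real.exp (-2*x) / (1 + Real.exp (-x))^4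
      = |x| * Real.exp (-2*|x|) / (1 + Real.exp (-|x|))^4 := by
    intro x
    rcases le_or_gt 0 x with h | h
    · rw [abs_of_nonneg h]
    · rw [abs_of_neg h]
      have h1 : (0:ℝ) < 1 + Real.exp (-x) := by positivity
      have h2 : (0:ℝ) < 1 + Real.exp (- -x) := by positivity
      have hkey : (1 + Real.exp (-x)) = Real.exp (-x) * (1 + Real.exp (- -x)) := by
        rw [mul_add, mul_one, ← Real.exp_add]
        ring_nf
        rw [Real.exp_zero]
        ring
      rw [hkey]
      have hx2 : Real.exp (-2*x) = Real.exp (-x) ^ 4 * Real.exp (-2 * -x) := by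
        rw [← Real.exp_nat_mul, ← Real.exp_add]
        ring_nf
      rw [hx2]
      field_simp
  simp_rw [heven]
  rw [integral_comp_abs (f := fun x => x * Real.exp (-2*x) / (1 + Real.exp (-x))^4), key]
  ring
end

section
/- For X with standard logistic density, E[|X|·e^{-2X}/(1+e^{-X})^2] = (2 log 2)/3 + 1/12; equivalently, ∫_{-∞}^{∞} |x|·e^{-3x}/(1+e^{-x})^4 dx = (2 log 2)/3 + 1/12. -/
open Real MeasureTheory Set Filter

noncomputable def logisticA (x : ℝ) : ℝ :=
  (-x * Real.exp (-x) ^ 3 / (1 + Real.exp (-x)) ^ 3 - Real.log (1 + Real.exp (-x)) +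
    Real.exp (-x) / (1 + Real.exp (-x)) + Real.exp (-x) ^ 2 / (2 * (1 + Real.exp (-x)) ^ 2)) / 3

noncomputable def logisticB (x : ℝ) : ℝ :=
  (-x * (3 * Real.exp (-x) + 3 * Real.exp (-x) ^ 2 + Real.exp (-x) ^ 3) / (1 + Real.exp (-x)) ^ 3
    - Real.log (1 + Real.exp (-x)) + 1 / (1 + Real.exp (-x)) +
      1 / (2 * (1 + Real.exp (-x)) ^ 2)) / 3

lemma exp_neg3 (x : ℝ) : Real.exp (-3 * x) = Real.exp (-x) ^ 3 := by
  rw [show (-3 : ℝ) * x = (3 : ℕ) * (-x) by push_cast; ring, Real.exp_nat_mul]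

lemma one_add_exp_ne (x : ℝ) : (1 : ℝ) + Real.exp (-x) ≠ 0 := by positivity

lemma hasDerivAt_logisticA (x : ℝ) :
    HasDerivAt logisticA (x * Real.exp (-3 * x) / (1 + Real.exp (-x)) ^ 4) x := by
  have hu : HasDerivAt (fun y : ℝ => Real.exp (-y)) (-Real.exp (-x)) x := by
    simpa using (hasDerivAt_neg x).exp
  have h1 : HasDerivAt (fun y : ℝ => 1 + Real.exp (-y)) (-Real.exp (-x)) x := hu.const_add 1
  have hpos : (0 : ℝ) < 1 + Real.exp (-x) := by positivity
  have hne : (1 : ℝ) + Real.exp (-x) ≠ 0 := ne_of_gt hpos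
  have hne3 : ((1 : ℝ) + Real.exp (-x)) ^ 3 ≠ 0 := pow_ne_zero _ hne
  have hne2 : (2 : ℝ) * (1 + Real.exp (-x)) ^ 2 ≠ 0 := by positivity
  have t1 := ((hasDerivAt_neg x).mul (hu.pow 3)).div (h1.pow 3) hne3
  have tlog := h1.log hne
  have t3 := hu.div h1 hne
  have t4 := (hu.pow 2).div ((h1.pow 2).const_mul 2) hne2
  have H := (((t1.sub tlog).add t3).add t4).div_const 3
  have hfun : logisticA = fun y : ℝ =>
      (-y * Real.exp (-y) ^ 3 / (1 + Real.exp (-y)) ^ 3 - Real.log (1 + Real.exp (-y)) +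
        Real.exp (-y) / (1 + Real.exp (-y)) +
        Real.exp (-y) ^ 2 / (2 * (1 + Real.exp (-y)) ^ 2)) / 3 := rfl
  rw [hfun]
  refine H.congr_deriv ?_
  simp only [Pi.pow_apply, Pi.mul_apply, Pi.neg_apply, Pi.div_apply, Nat.cast_ofNat]
  rw [exp_neg3]
  field_simp
  ring

lemma hasDerivAt_logisticB (x : ℝ) :
    HasDerivAt logisticB (x * Real.exp (-x) / (1 + Real.exp (-x)) ^ 4) x := by
  have hu : HasDerivAt (fun y : ℝ => Real.exp (-y)) (-Real.exp (-x)) x := by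
    simpa using (hasDerivAt_neg x).exp
  have h1 : HasDerivAt (fun y : ℝ => 1 + Real.exp (-y)) (-Real.exp (-x)) x := hu.const_add 1
  have hpos : (0 : ℝ) < 1 + Real.exp (-x) := by positivity
  have hne : (1 : ℝ) + Real.exp (-x) ≠ 0 := ne_of_gt hpos
  have hne3 : ((1 : ℝ) + Real.exp (-x)) ^ 3 ≠ 0 := pow_ne_zero _ hne
  have hne2 : (2 : ℝ) * (1 + Real.exp (-x)) ^ 2 ≠ 0 := by positivity
  have hnum : HasDerivAt (fun y : ℝ =>
      3 * Real.exp (-y) + 3 * Real.exp (-y) ^ 2 + Real.exp (-y) ^ 3)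
      (3 * -Real.exp (-x) + 3 * (2 * Real.exp (-x) ^ 1 * -Real.exp (-x)) +
        3 * Real.exp (-x) ^ 2 * -Real.exp (-x)) x :=
    ((hu.const_mul 3).add ((hu.pow 2).const_mul 3)).add (hu.pow 3)
  have t1 := ((hasDerivAt_neg x).mul hnum).div (h1.pow 3) hne3
  have tlog := h1.log hne
  have t3 := (hasDerivAt_const x (1 : ℝ)).div h1 hne
  have t4 := (hasDerivAt_const x (1 : ℝ)).div ((h1.pow 2).const_mul 2) hne2
  have H := (((t1.sub tlog).add t3).add t4).div_const 3
  have hfun : logisticB = fun y : ℝ =>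
      (-y * (3 * Real.exp (-y) + 3 * Real.exp (-y) ^ 2 + Real.exp (-y) ^ 3) /
          (1 + Real.exp (-y)) ^ 3 - Real.log (1 + Real.exp (-y)) + 1 / (1 + Real.exp (-y)) +
        1 / (2 * (1 + Real.exp (-y)) ^ 2)) / 3 := rfl
  rw [hfun]
  refine H.congr_deriv ?_
  simp only [Pi.pow_apply, Pi.mul_apply, Pi.neg_apply, Pi.div_apply, Nat.cast_ofNat]
  field_simp
  ring

lemma tendsto_logisticA : Tendsto logisticA atTop (nhds 0) := by
  have hU : Tendsto (fun x : ℝ => Real.exp (-x)) atTop (nhds 0) :=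
    Real.tendsto_exp_neg_atTop_nhds_zero
  have hXU : Tendsto (fun x : ℝ => x * Real.exp (-x)) atTop (nhds 0) := by
    simpa using Real.tendsto_pow_mul_exp_neg_atTop_nhds_zero 1
  have hD : Tendsto (fun x : ℝ => 1 + Real.exp (-x)) atTop (nhds (1 + 0)) := hU.const_add 1
  have T1 : Tendsto (fun x : ℝ => -x * Real.exp (-x) ^ 3 / (1 + Real.exp (-x)) ^ 3)
      atTop (nhds 0) := by
    have h := ((hXU.mul (hU.mul hU)).neg).div (hD.pow 3) (by norm_num)
    rw [show -(0 * (0 * 0) : ℝ) / ((1 : ℝ) + 0) ^ 3 = 0 by norm_num] at h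
    exact h.congr (fun x => by simp only [Pi.div_apply]; ring)
  have Tlog : Tendsto (fun x : ℝ => Real.log (1 + Real.exp (-x))) atTop (nhds 0) := by
    have h := (Real.continuousAt_log (by norm_num : (1 : ℝ) + 0 ≠ 0)).tendsto.comp hD
    rw [show Real.log ((1 : ℝ) + 0) = 0 by norm_num] at h
    exact h
  have T3 : Tendsto (fun x : ℝ => Real.exp (-x) / (1 + Real.exp (-x))) atTop (nhds 0) := by
    have h := hU.div hD (by norm_num)
    rwa [show (0 : ℝ) / (1 + 0) = 0 by norm_num] at h
  have T4 : Tendsto (fun x : ℝ => Real.exp (-x) ^ 2 / (2 * (1 + Real.exp (-x)) ^ 2))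
      atTop (nhds 0) := by
    have h := (hU.pow 2).div ((hD.pow 2).const_mul 2) (by norm_num)
    rwa [show (0 : ℝ) ^ 2 / (2 * (1 + 0) ^ 2) = 0 by norm_num] at h
  have H := (((T1.sub Tlog).add T3).add T4).div_const 3
  rwa [show ((0 : ℝ) - 0 + 0 + 0) / 3 = 0 by norm_num] at H

lemma tendsto_logisticB : Tendsto logisticB atTop (nhds (1 / 2)) := by
  have hU : Tendsto (fun x : ℝ => Real.exp (-x)) atTop (nhds 0) :=
    Real.tendsto_exp_neg_atTop_nhds_zero
  have hXU : Tendsto (fun x : ℝ => x * Real.exp (-x)) atTop (nhds 0) := by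
    simpa using Real.tendsto_pow_mul_exp_neg_atTop_nhds_zero 1
  have hD : Tendsto (fun x : ℝ => 1 + Real.exp (-x)) atTop (nhds (1 + 0)) := hU.const_add 1
  have T1 : Tendsto (fun x : ℝ =>
      -x * (3 * Real.exp (-x) + 3 * Real.exp (-x) ^ 2 + Real.exp (-x) ^ 3) /
        (1 + Real.exp (-x)) ^ 3) atTop (nhds 0) := by
    have hP : Tendsto (fun x : ℝ => 3 + (3 * Real.exp (-x) + Real.exp (-x) * Real.exp (-x)))
        atTop (nhds (3 + (3 * 0 + 0 * 0))) := ((hU.const_mul 3).add (hU.mul hU)).const_add 3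
    have h := ((hXU.mul hP).neg).div (hD.pow 3) (by norm_num)
    rw [show -(0 * ((3 : ℝ) + (3 * 0 + 0 * 0))) / ((1 : ℝ) + 0) ^ 3 = 0 by norm_num] at h
    exact h.congr (fun x => by simp only [Pi.div_apply]; ring)
  have Tlog : Tendsto (fun x : ℝ => Real.log (1 + Real.exp (-x))) atTop (nhds 0) := by
    have h := (Real.continuousAt_log (by norm_num : (1 : ℝ) + 0 ≠ 0)).tendsto.comp hD
    rw [show Real.log ((1 : ℝ) + 0) = 0 by norm_num] at h
    exact h
  have T3 : Tendsto (fun x : ℝ => 1 / (1 + Real.exp (-x))) atTop (nhds 1) := by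
    have h := Tendsto.div (tendsto_const_nhds : Tendsto (fun _ : ℝ => (1 : ℝ)) atTop (nhds 1))
      hD (by norm_num : (1 : ℝ) + 0 ≠ 0)
    rwa [show (1 : ℝ) / (1 + 0) = 1 by norm_num] at h
  have T4 : Tendsto (fun x : ℝ => 1 / (2 * (1 + Real.exp (-x)) ^ 2)) atTop (nhds (1 / 2)) := by
    have h := Tendsto.div (tendsto_const_nhds : Tendsto (fun _ : ℝ => (1 : ℝ)) atTop (nhds 1))
      ((hD.pow 2).const_mul 2) (by norm_num : (2 : ℝ) * (1 + 0) ^ 2 ≠ 0)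
    rwa [show (1 : ℝ) / (2 * (1 + 0) ^ 2) = 1 / 2 by norm_num] at h
  have H := (((T1.sub Tlog).add T3).add T4).div_const 3
  rwa [show ((0 : ℝ) - 0 + 1 + 1 / 2) / 3 = 1 / 2 by norm_num] at H

lemma logisticA_zero : logisticA 0 = (5 / 8 - Real.log 2) / 3 := by
  unfold logisticA
  norm_num [Real.exp_zero]
  ring_nf

lemma logisticB_zero : logisticB 0 = (5 / 8 - Real.log 2) / 3 := by
  unfold logisticB
  norm_num [Real.exp_zero]
  ring_nf

theorem logistic_abs_moment_two :
    ∫ x : ℝ, |x| * Real.exp (-3*x) / (1 + Real.exp (-x))^4 = 2 * Real.log 2 / 3 + 1/12 := by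
  set g : ℝ → ℝ := fun x => |x| * Real.exp (-3 * x) / (1 + Real.exp (-x)) ^ 4 with hg
  -- right half
  have hAderiv : ∀ x ∈ Ici (0 : ℝ),
      HasDerivAt logisticA (x * Real.exp (-3 * x) / (1 + Real.exp (-x)) ^ 4) x :=
    fun x _ => hasDerivAt_logisticA x
  have hApos : ∀ x ∈ Ioi (0 : ℝ), 0 ≤ x * Real.exp (-3 * x) / (1 + Real.exp (-x)) ^ 4 := by
    intro x hx
    have : (0 : ℝ) < x := hx
    positivity
  have h1 := integral_Ioi_of_hasDerivAt_of_nonneg' hAderiv hApos tendsto_logisticA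
  have i1 := integrableOn_Ioi_deriv_of_nonneg' hAderiv hApos tendsto_logisticA
  -- left half (after reflection)
  have hBderiv : ∀ x ∈ Ici (0 : ℝ),
      HasDerivAt logisticB (x * Real.exp (-x) / (1 + Real.exp (-x)) ^ 4) x :=
    fun x _ => hasDerivAt_logisticB x
  have hBpos : ∀ x ∈ Ioi (0 : ℝ), 0 ≤ x * Real.exp (-x) / (1 + Real.exp (-x)) ^ 4 := by
    intro x hx
    have : (0 : ℝ) < x := hx
    positivity
  have h2 := integral_Ioi_of_hasDerivAt_of_nonneg' hBderiv hBpos tendsto_logisticB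
  have i2 := integrableOn_Ioi_deriv_of_nonneg' hBderiv hBpos tendsto_logisticB
  -- identification of g on the right
  have hg_right : EqOn g (fun x => x * Real.exp (-3 * x) / (1 + Real.exp (-x)) ^ 4) (Ioi 0) := by
    intro x hx
    simp only [g]
    rw [abs_of_pos hx]
  -- identification of g ∘ neg on the right
  have key : ∀ x : ℝ, Real.exp (3 * x) / (1 + Real.exp x) ^ 4
      = Real.exp (-x) / (1 + Real.exp (-x)) ^ 4 := by
    intro x
    have h3 : Real.exp (3 * x) = Real.exp x ^ 3 := by
      rw [show (3 : ℝ) * x = (3 : ℕ) * x by push_cast; ring, Real.exp_nat_mul]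
    rw [h3, Real.exp_neg, div_eq_div_iff (by positivity) (by positivity)]
    have h := Real.exp_ne_zero x
    field_simp
    ring
  have hg_neg : ∀ x : ℝ, 0 ≤ x → g (-x) = x * Real.exp (-x) / (1 + Real.exp (-x)) ^ 4 := by
    intro x hx
    show |(-x)| * Real.exp (-3 * -x) / (1 + Real.exp (-(-x))) ^ 4 = _
    rw [abs_neg, abs_of_nonneg hx, neg_neg, show (-3 : ℝ) * -x = 3 * x by ring,
      mul_div_assoc, key x, ← mul_div_assoc]
  -- integrability of g on both halves
  have ig_right : IntegrableOn g (Ioi 0) :=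
    i1.congr_fun (fun x hx => (hg_right hx).symm) measurableSet_Ioi
  have icomp : IntegrableOn (fun x => g (-x)) (Ioi 0) :=
    i2.congr_fun (fun x hx => (hg_neg x (le_of_lt hx)).symm) measurableSet_Ioi
  have hpre : (fun x : ℝ => -x) ⁻¹' (Iic 0) = Ici 0 := by
    ext y; simp
  have ig_left : IntegrableOn g (Iic 0) := by
    have hmp := (MeasurePreserving.integrableOn_comp_preimage
      (Measure.measurePreserving_neg (volume : Measure ℝ))
      (Homeomorph.neg ℝ).measurableEmbedding (f := g) (s := Iic 0))
    have : IntegrableOn (fun x => g (-x)) ((fun x : ℝ => -x) ⁻¹' (Iic 0)) := by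
      rw [hpre, integrableOn_Ici_iff_integrableOn_Ioi]
      exact icomp
    exact hmp.mp this
  -- split the integral
  have split := (intervalIntegral.integral_Iic_add_Ioi (μ := volume) ig_left ig_right).symm
  have el : ∫ x in Iic (0 : ℝ), g x = ∫ x in Ioi (0 : ℝ), g (-x) := by
    have h := integral_comp_neg_Ioi (0 : ℝ) g
    rw [neg_zero] at h
    exact h.symm
  have el2 : ∫ x in Ioi (0 : ℝ), g (-x)
      = ∫ x in Ioi (0 : ℝ), x * Real.exp (-x) / (1 + Real.exp (-x)) ^ 4 :=
    setIntegral_congr_fun measurableSet_Ioi (fun x hx => hg_neg x (le_of_lt hx))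
  have er : ∫ x in Ioi (0 : ℝ), g x
      = ∫ x in Ioi (0 : ℝ), x * Real.exp (-3 * x) / (1 + Real.exp (-x)) ^ 4 :=
    setIntegral_congr_fun measurableSet_Ioi hg_right
  have hgoal : ∫ x : ℝ, g x = 2 * Real.log 2 / 3 + 1 / 12 := by
    rw [split, el, el2, er, h1, h2, logisticA_zero, logisticB_zero]
    ring
  simpa [g] using hgoal
end

section
/- For X with standard logistic density, E[(X·tanh(X/2) − 1)^2] = (π^2+3)/9. -/
open Real Set MeasureTheory Filter Topology

noncomputable def lr (x : ℝ) : ℝ := (Real.exp x + 1)⁻¹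

noncomputable def lf (x : ℝ) : ℝ :=
  (x * Real.tanh (x/2) - 1)^2 * (Real.exp (-x) / (1 + Real.exp (-x))^2)

noncomputable def lPhi (x : ℝ) : ℝ :=
  x^2 * (-(4/3) * lr x ^ 3 + 2 * lr x ^ 2 - lr x)
    + x * (-(2/3) * lr x ^ 2 + (2/3) * lr x) - lr x / 3

lemma hasDerivAt_lr (x : ℝ) :
    HasDerivAt lr (-Real.exp x / (Real.exp x + 1)^2) x := by
  have h : HasDerivAt (fun y : ℝ => Real.exp y + 1) (Real.exp x) x :=
    (Real.hasDerivAt_exp x).add_const 1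
  exact h.inv (by positivity)

lemma hasDerivAt_lPhi (x : ℝ) :
    HasDerivAt lPhi (lf x - (2/3) * (x * lr x)) x := by
  have hr := hasDerivAt_lr x
  set u' := -Real.exp x / (Real.exp x + 1)^2 with hu'
  have hP : HasDerivAt (fun y => -(4/3) * lr y ^ 3 + 2 * lr y ^ 2 - lr y)
      (-(4/3) * (3 * lr x ^ 2 * u') + 2 * (2 * lr x ^ 1 * u') - u') x := by
    exact (((hr.pow 3).const_mul _).add ((hr.pow 2).const_mul _)).sub hr
  have hQ : HasDerivAt (fun y => -(2/3) * lr y ^ 2 + (2/3) * lr y)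
      (-(2/3) * (2 * lr x ^ 1 * u') + (2/3) * u') x :=
    ((hr.pow 2).const_mul _).add (hr.const_mul _)
  have hx2 : HasDerivAt (fun y : ℝ => y^2) (2 * x) x := by
    simpa using hasDerivAt_pow 2 x
  have hD := (((hx2.mul hP).add ((hasDerivAt_id x).mul hQ)).sub (hr.div_const 3))
  have : HasDerivAt lPhi
      (((2*x) * (-(4/3) * lr x ^ 3 + 2 * lr x ^ 2 - lr x)
        + x^2 * (-(4/3) * (3 * lr x ^ 2 * u') + 2 * (2 * lr x ^ 1 * u') - u'))
       + (1 * (-(2/3) * lr x ^ 2 + (2/3) * lr x)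
        + x * (-(2/3) * (2 * lr x ^ 1 * u') + (2/3) * u'))
       - u' / 3) x := hD
  convert this using 1
  -- algebraic identity
  have hE : Real.exp x = Real.exp (x/2) ^ 2 := by
    rw [← Real.exp_nat_mul]; congr 1; ring
  have hEpos : 0 < Real.exp (x/2) := Real.exp_pos _
  have hne : Real.exp (x/2) ≠ 0 := ne_of_gt hEpos
  have hne2 : Real.exp (x/2)^2 + 1 ≠ 0 := by positivity
  rw [lf, hu', lr]
  rw [Real.tanh_eq_sinh_div_cosh, Real.sinh_eq, Real.cosh_eq, Real.exp_neg, Real.exp_neg, hE]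
  field_simp
  ring


lemma lr_pos (x : ℝ) : 0 < lr x := by
  have := Real.exp_pos x; rw [lr]; positivity

lemma lr_le_exp (x : ℝ) : lr x ≤ Real.exp (-x) := by
  rw [lr, Real.exp_neg]
  exact inv_anti₀ (Real.exp_pos x) (by linarith)

lemma abs_tanh_le_one (y : ℝ) : |Real.tanh y| ≤ 1 := by
  rw [Real.tanh_eq_sinh_div_cosh, abs_div, abs_of_pos (Real.cosh_pos y),
    div_le_one (Real.cosh_pos y)]
  nlinarith [Real.cosh_sq y, Real.cosh_pos y, abs_nonneg (Real.sinh y),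
    sq_abs (Real.sinh y)]

lemma lf_nonneg (x : ℝ) : 0 ≤ lf x := by
  have h := Real.exp_pos (-x)
  have : (0:ℝ) < (1 + Real.exp (-x))^2 := by positivity
  exact mul_nonneg (sq_nonneg _) (by positivity)

lemma lf_le (x : ℝ) (hx : 0 ≤ x) : lf x ≤ (x+1)^2 * Real.exp (-x) := by
  have ht := abs_le.mp (abs_tanh_le_one (x/2))
  have a1 : 0 ≤ x * (1 + Real.tanh (x/2)) := mul_nonneg hx (by linarith [ht.1])
  have a2 : 0 ≤ x * (1 - Real.tanh (x/2)) + 2 := by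
    have := mul_nonneg hx (by linarith [ht.2] : (0:ℝ) ≤ 1 - Real.tanh (x/2)); linarith
  have h1 : (x * Real.tanh (x/2) - 1)^2 ≤ (x+1)^2 := by nlinarith [mul_nonneg a1 a2]
  have h2 : Real.exp (-x) / (1 + Real.exp (-x))^2 ≤ Real.exp (-x) := by
    apply div_le_self (Real.exp_pos _).le
    nlinarith [Real.exp_pos (-x)]
  have h3 : (0:ℝ) ≤ Real.exp (-x) / (1 + Real.exp (-x))^2 := by positivity
  calc lf x ≤ (x+1)^2 * (Real.exp (-x) / (1 + Real.exp (-x))^2) :=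
        mul_le_mul_of_nonneg_right h1 h3
    _ ≤ (x+1)^2 * Real.exp (-x) := by
        apply mul_le_mul_of_nonneg_left h2 (by positivity)

lemma continuous_lf : Continuous lf := by
  have h1 : Continuous fun x : ℝ => Real.tanh (x/2) := by
    simp only [Real.tanh_eq_sinh_div_cosh]
    exact (Real.continuous_sinh.comp (by continuity)).div
      (Real.continuous_cosh.comp (by continuity))
      (fun x => (Real.cosh_pos _).ne')
  apply Continuous.mul
  · continuity
  · apply Continuous.div (by continuity) (by continuity)
    intro x
    have := Real.exp_pos (-x); positivity

/-- generic integrability helper -/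
lemma my_integrableOn {f : ℝ → ℝ} (hf : Continuous f)
    (h : Tendsto (fun x => f x / Real.exp (-(1/2) * x)) atTop (𝓝 0)) :
    IntegrableOn f (Ioi (0:ℝ)) := by
  refine integrable_of_isBigO_exp_neg (b := 1/2) (by norm_num) hf.continuousOn ?_
  apply Asymptotics.IsLittleO.isBigO
  rw [Asymptotics.isLittleO_iff_tendsto (fun x h => absurd h (Real.exp_ne_zero _))]
  exact h

lemma tendsto_sq_exp : Tendsto (fun x : ℝ => x^2 * Real.exp (-(1/2) * x)) atTop (𝓝 0) := by
  have := tendsto_rpow_mul_exp_neg_mul_atTop_nhds_zero 2 (1/2) (by norm_num)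
  refine this.congr' ?_
  filter_upwards [eventually_ge_atTop (0:ℝ)] with x hx
  rw [show ((2:ℝ) = ((2:ℕ):ℝ)) by norm_num, Real.rpow_natCast]

lemma tendsto_one_exp : Tendsto (fun x : ℝ => x * Real.exp (-(1/2) * x)) atTop (𝓝 0) := by
  have := tendsto_rpow_mul_exp_neg_mul_atTop_nhds_zero 1 (1/2) (by norm_num)
  refine this.congr' ?_
  filter_upwards with x
  rw [Real.rpow_one]

lemma integrableOn_lf : IntegrableOn lf (Ioi (0:ℝ)) := by
  apply my_integrableOn continuous_lf
  apply squeeze_zero'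
  · filter_upwards [eventually_ge_atTop (0:ℝ)] with x hx
    exact div_nonneg (lf_nonneg x) (Real.exp_pos _).le
  · filter_upwards [eventually_ge_atTop (1:ℝ)] with x hx
    have hx0 : (0:ℝ) ≤ x := by linarith
    have hE : (0:ℝ) < Real.exp (-(1/2) * x) := Real.exp_pos _
    have key : Real.exp (-x) / Real.exp (-(1/2)*x) = Real.exp (-(1/2)*x) := by
      rw [← Real.exp_sub]; ring_nf
    calc lf x / Real.exp (-(1/2) * x)
        ≤ ((x+1)^2 * Real.exp (-x)) / Real.exp (-(1/2)*x) := by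
          apply div_le_div_of_nonneg_right (lf_le x hx0) hE.le
      _ = (x+1)^2 * Real.exp (-(1/2)*x) := by rw [mul_div_assoc, key]
      _ ≤ (2*x)^2 * Real.exp (-(1/2)*x) := by
          apply mul_le_mul_of_nonneg_right _ hE.le
          have : x + 1 ≤ 2*x := by linarith
          nlinarith
      _ = 4 * (x^2 * Real.exp (-(1/2)*x)) := by ring
  · simpa using tendsto_sq_exp.const_mul (4:ℝ)

lemma integrableOn_xlr : IntegrableOn (fun x => x * lr x) (Ioi (0:ℝ)) := by
  apply my_integrableOn (by
    apply continuous_id.mul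
    apply Continuous.inv₀ (by continuity)
    intro x; have := Real.exp_pos x; positivity)
  apply squeeze_zero'
  · filter_upwards [eventually_ge_atTop (0:ℝ)] with x hx
    exact div_nonneg (mul_nonneg hx (lr_pos x).le) (Real.exp_pos _).le
  · filter_upwards [eventually_ge_atTop (0:ℝ)] with x hx
    have hE : (0:ℝ) < Real.exp (-(1/2) * x) := Real.exp_pos _
    have key : Real.exp (-x) / Real.exp (-(1/2)*x) = Real.exp (-(1/2)*x) := by
      rw [← Real.exp_sub]; ring_nf
    calc x * lr x / Real.exp (-(1/2) * x)
        ≤ (x * Real.exp (-x)) / Real.exp (-(1/2)*x) := by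
          apply div_le_div_of_nonneg_right
            (mul_le_mul_of_nonneg_left (lr_le_exp x) hx) hE.le
      _ = x * Real.exp (-(1/2)*x) := by rw [mul_div_assoc, key]
  · exact tendsto_one_exp

lemma integrableOn_x_exp {c : ℝ} (hc : 1 ≤ c) :
    IntegrableOn (fun x => x * Real.exp (-(c * x))) (Ioi (0:ℝ)) := by
  apply my_integrableOn (by continuity)
  apply squeeze_zero'
  · filter_upwards [eventually_ge_atTop (0:ℝ)] with x hx
    exact div_nonneg (mul_nonneg hx (Real.exp_pos _).le) (Real.exp_pos _).le
  · filter_upwards [eventually_ge_atTop (0:ℝ)] with x hx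
    have hE : (0:ℝ) < Real.exp (-(1/2) * x) := Real.exp_pos _
    have hcx : -(c*x) ≤ -x := by nlinarith
    have key : Real.exp (-x) / Real.exp (-(1/2)*x) = Real.exp (-(1/2)*x) := by
      rw [← Real.exp_sub]; ring_nf
    calc x * Real.exp (-(c*x)) / Real.exp (-(1/2) * x)
        ≤ (x * Real.exp (-x)) / Real.exp (-(1/2) * x) := by
          apply div_le_div_of_nonneg_right
            (mul_le_mul_of_nonneg_left (Real.exp_le_exp.mpr hcx) hx) hE.le
      _ = x * Real.exp (-(1/2)*x) := by rw [mul_div_assoc, key]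
  · exact tendsto_one_exp

lemma integral_x_exp {c : ℝ} (hc : 0 < c) :
    ∫ x in Ioi (0:ℝ), x * Real.exp (-(c * x)) = 1 / c^2 := by
  have h := Real.integral_rpow_mul_exp_neg_mul_Ioi (a := 2) (r := c) two_pos hc
  rw [Real.Gamma_two] at h
  have h2 : ∀ x ∈ Ioi (0:ℝ), x ^ ((2:ℝ) - 1) * Real.exp (-(c * x)) = x * Real.exp (-(c*x)) := by
    intro x hx
    norm_num
  rw [setIntegral_congr_fun measurableSet_Ioi h2] at h
  rw [h]
  rw [show ((2:ℝ) = ((2:ℕ):ℝ)) by norm_num, Real.rpow_natCast]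
  field_simp

lemma hasSum_one_div_succ_sq :
    HasSum (fun n : ℕ => 1 / ((n:ℝ)+1)^2) (π^2/6) := by
  have hz := hasSum_zeta_two
  have h := (hasSum_nat_add_iff' (f := fun n : ℕ => 1/(n:ℝ)^2) 1).mpr hz
  simp only [Finset.range_one, Finset.sum_singleton, Nat.cast_zero] at h
  norm_num at h
  exact h.congr_fun fun n => by push_cast; ring

lemma hasSum_alt : HasSum
    (fun k : ℕ => 1 / (2*(k:ℝ)+1)^2 - 1 / (2*(k:ℝ)+2)^2) (π^2/12) := by
  have h1 := hasSum_one_div_succ_sq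
  -- even part (of f n = 1/n²), i.e. k ↦ 1/(2k)²
  have he : HasSum (fun k : ℕ => 1 / (2*(k:ℝ))^2) (π^2/24) := by
    have := hasSum_zeta_two.mul_left (4⁻¹ : ℝ)
    have h2 : (π^2/24 : ℝ) = 4⁻¹ * (π^2/6) := by ring
    rw [h2]
    exact this.congr_fun fun n => by rw [mul_pow]; rw [one_div, one_div, mul_inv]; norm_num
  -- odd part is summable
  have hso : Summable (fun k : ℕ => 1 / (2*(k:ℝ)+1)^2) := by
    apply Summable.of_nonneg_of_le (fun k => by positivity) (fun k => ?_) h1.summable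
    apply one_div_le_one_div_of_le (by positivity)
    have : ((k:ℝ)+1) ≤ 2*(k:ℝ)+1 := by nlinarith [Nat.cast_nonneg (α := ℝ) k]
    nlinarith [Nat.cast_nonneg (α := ℝ) k]
  have hodd := hso.hasSum
  -- combine to find the odd sum
  have htot : HasSum (fun n : ℕ => 1/(n:ℝ)^2) (π^2/24 + ∑' k : ℕ, 1 / (2*(k:ℝ)+1)^2) := by
    refine HasSum.even_add_odd ?_ ?_
    · exact he.congr_fun fun k => by push_cast; ring_nf
    · exact hodd.congr_fun fun k => by push_cast; ring_nf
  have hval : π^2/24 + (∑' k : ℕ, 1 / (2*(k:ℝ)+1)^2) = π^2/6 := htot.unique hasSum_zeta_two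
  have hodd' : HasSum (fun k : ℕ => 1 / (2*(k:ℝ)+1)^2) (π^2/8) := by
    have : (∑' k : ℕ, 1 / (2*(k:ℝ)+1)^2) = π^2/8 := by linarith
    rwa [this] at hodd
  -- shifted even part: k ↦ 1/(2k+2)²
  have he2 : HasSum (fun k : ℕ => 1 / (2*(k:ℝ)+2)^2) (π^2/24) := by
    have := (h1.mul_left (4⁻¹ : ℝ))
    have h2 : (π^2/24 : ℝ) = 4⁻¹ * (π^2/6) := by ring
    rw [h2]
    refine this.congr_fun fun n => ?_
    have : (2*(n:ℝ)+2)^2 = 4 * ((n:ℝ)+1)^2 := by ring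
    rw [this, one_div, one_div, mul_inv]
  have hsub := hodd'.sub he2
  have hv : (π^2/8 : ℝ) - π^2/24 = π^2/12 := by ring
  rw [hv] at hsub
  exact hsub

lemma integral_xlr : ∫ x in Ioi (0:ℝ), x * lr x = π^2/12 := by
  set μ := volume.restrict (Ioi (0:ℝ)) with hμ
  set F : ℕ → ℝ → ℝ := fun k x =>
    x * (Real.exp (-((2*(k:ℝ)+1) * x)) - Real.exp (-((2*(k:ℝ)+2) * x))) with hF
  have hc1 : ∀ k : ℕ, (1:ℝ) ≤ 2*(k:ℝ)+1 := fun k => by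
    have := Nat.cast_nonneg (α := ℝ) k; linarith
  have hc2 : ∀ k : ℕ, (1:ℝ) ≤ 2*(k:ℝ)+2 := fun k => by
    have := Nat.cast_nonneg (α := ℝ) k; linarith
  have hFint : ∀ k : ℕ, Integrable (F k) μ := by
    intro k
    have h1 := integrableOn_x_exp (hc1 k)
    have h2 := integrableOn_x_exp (hc2 k)
    exact (h1.sub h2).congr (Filter.Eventually.of_forall fun x => by
      simp only [Pi.sub_apply, hF]; ring)
  have hFval : ∀ k : ℕ, ∫ a, F k a ∂μ = 1/(2*(k:ℝ)+1)^2 - 1/(2*(k:ℝ)+2)^2 := by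
    intro k
    have h1 := integrableOn_x_exp (hc1 k)
    have h2 := integrableOn_x_exp (hc2 k)
    have : ∫ a, F k a ∂μ = (∫ x in Ioi (0:ℝ), x * Real.exp (-((2*(k:ℝ)+1) * x)))
        - ∫ x in Ioi (0:ℝ), x * Real.exp (-((2*(k:ℝ)+2) * x)) := by
      rw [← integral_sub h1 h2]
      exact setIntegral_congr_fun measurableSet_Ioi (fun x _ => by ring)
    rw [this, integral_x_exp (by linarith [hc1 k]), integral_x_exp (by linarith [hc2 k])]
  have hFnonneg : ∀ k : ℕ, ∀ x ∈ Ioi (0:ℝ), 0 ≤ F k x := by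
    intro k x hx
    have hxpos : (0:ℝ) < x := hx
    apply mul_nonneg hxpos.le
    have : -((2*(k:ℝ)+2) * x) ≤ -((2*(k:ℝ)+1) * x) := by nlinarith
    linarith [Real.exp_le_exp.mpr this]
  have hFnorm : ∀ k : ℕ, ∫ a, ‖F k a‖ ∂μ = 1/(2*(k:ℝ)+1)^2 - 1/(2*(k:ℝ)+2)^2 := by
    intro k
    rw [← hFval k, hμ]
    exact setIntegral_congr_fun measurableSet_Ioi
      (fun x hx => Real.norm_of_nonneg (hFnonneg k x hx))
  have hsummable : Summable fun k : ℕ => ∫ a, ‖F k a‖ ∂μ := by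
    apply Summable.congr hasSum_alt.summable
    intro k; rw [hFnorm k]
  have hexch := MeasureTheory.integral_tsum_of_summable_integral_norm hFint hsummable
  -- left side is π²/12
  have hL : ∑' k : ℕ, ∫ a, F k a ∂μ = π^2/12 := by
    rw [tsum_congr hFval]
    exact hasSum_alt.tsum_eq
  -- right side equals the target integral
  have hR : ∫ a, (∑' k : ℕ, F k a) ∂μ = ∫ x in Ioi (0:ℝ), x * lr x := by
    rw [hμ]
    apply setIntegral_congr_fun measurableSet_Ioi
    intro x hx
    show (∑' k : ℕ, F k x) = x * lr x
    have hxpos : (0:ℝ) < x := hx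
    have hq1 : Real.exp (-(2*x)) < 1 := by
      rw [Real.exp_lt_one_iff]; linarith
    have hq0 : (0:ℝ) ≤ Real.exp (-(2*x)) := (Real.exp_pos _).le
    have hterm : ∀ k : ℕ, F k x
        = (x * (Real.exp (-x) - Real.exp (-(2*x)))) * Real.exp (-(2*x)) ^ k := by
      intro k
      have e1 : Real.exp (-((2*(k:ℝ)+1) * x)) = Real.exp (-x) * Real.exp (-(2*x)) ^ k := by
        rw [← Real.exp_nat_mul, ← Real.exp_add]; congr 1; push_cast; ring
      have e2 : Real.exp (-((2*(k:ℝ)+2) * x)) = Real.exp (-(2*x)) * Real.exp (-(2*x)) ^ k := by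
        rw [← Real.exp_nat_mul, ← Real.exp_add]; congr 1; push_cast; ring
      rw [hF]; simp only []
      rw [e1, e2]; ring
    rw [tsum_congr hterm, tsum_mul_left, tsum_geometric_of_lt_one hq0 hq1]
    -- algebra: x (e^{-x} - e^{-2x}) / (1 - e^{-2x}) = x * (e^x + 1)⁻¹
    have hne : Real.exp x ≠ 0 := Real.exp_ne_zero x
    have hne2 : (1:ℝ) - Real.exp (-(2*x)) ≠ 0 := sub_ne_zero.mpr (ne_of_lt hq1).symm
    have hpos : (0:ℝ) < Real.exp x + 1 := by positivity
    rw [lr]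
    rw [show Real.exp (-(2*x)) = (Real.exp x)⁻¹^2 by
      rw [← Real.exp_neg, ← Real.exp_nat_mul]; congr 1; push_cast; ring] at hne2 ⊢
    rw [Real.exp_neg]
    have hgt : 1 < Real.exp x := by
      have := Real.exp_lt_exp.mpr hxpos; rwa [Real.exp_zero] at this
    have hE3 : 0 < Real.exp x ^ 3 := pow_pos (Real.exp_pos x) 3
    have hE2 : 1 < Real.exp x ^ 2 := by nlinarith
    have h5 : -Real.exp x^3 + Real.exp x^5 ≠ 0 := by
      nlinarith [mul_pos hE3 (sub_pos.mpr hE2)]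
    field_simp [h5]
    have h6 : Real.exp x ^ 2 - 1 ≠ 0 := by linarith
    field_simp
    ring
  rw [← hR, ← hexch, hL]

lemma tendsto_lr_zero : Tendsto lr atTop (𝓝 0) := by
  apply squeeze_zero (fun x => (lr_pos x).le) lr_le_exp
  exact Real.tendsto_exp_neg_atTop_nhds_zero

lemma tendsto_xlr_zero : Tendsto (fun x => x * lr x) atTop (𝓝 0) := by
  apply squeeze_zero'
  · filter_upwards [eventually_ge_atTop (0:ℝ)] with x hx
    exact mul_nonneg hx (lr_pos x).le
  · filter_upwards [eventually_ge_atTop (0:ℝ)] with x hx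
    calc x * lr x ≤ x * Real.exp (-x) := mul_le_mul_of_nonneg_left (lr_le_exp x) hx
      _ ≤ x * Real.exp (-(1/2) * x) := by
          apply mul_le_mul_of_nonneg_left (Real.exp_le_exp.mpr (by linarith)) hx
  · exact tendsto_one_exp

lemma tendsto_x2lr_zero : Tendsto (fun x => x^2 * lr x) atTop (𝓝 0) := by
  apply squeeze_zero'
  · filter_upwards [eventually_ge_atTop (0:ℝ)] with x hx
    exact mul_nonneg (by positivity) (lr_pos x).le
  · filter_upwards [eventually_ge_atTop (0:ℝ)] with x hx
    calc x^2 * lr x ≤ x^2 * Real.exp (-x) :=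
        mul_le_mul_of_nonneg_left (lr_le_exp x) (by positivity)
      _ ≤ x^2 * Real.exp (-(1/2) * x) := by
          apply mul_le_mul_of_nonneg_left (Real.exp_le_exp.mpr (by linarith)) (by positivity)
  · exact tendsto_sq_exp

lemma tendsto_lPhi_zero : Tendsto lPhi atTop (𝓝 0) := by
  have heq : lPhi = fun x => (x^2 * lr x) * (-(4/3) * lr x^2 + 2 * lr x - 1)
      + (x * lr x) * (-(2/3) * lr x + 2/3) - lr x / 3 := by
    funext x; rw [lPhi]; ring
  rw [heq]
  have h1 : Tendsto (fun x => -(4/3) * lr x^2 + 2 * lr x - 1) atTop (𝓝 (-1)) := by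
    have := (((tendsto_lr_zero.pow 2).const_mul (-(4/3))).add
      (tendsto_lr_zero.const_mul 2)).sub_const 1
    norm_num at this
    convert this using 2 <;> ring
  have h2 : Tendsto (fun x => -(2/3) * lr x + 2/3) atTop (𝓝 (2/3)) := by
    have := (tendsto_lr_zero.const_mul (-(2/3))).add_const (2/3)
    norm_num at this
    convert this using 2 <;> ring
  have h3 := ((tendsto_x2lr_zero.mul h1).add (tendsto_xlr_zero.mul h2)).sub
    (tendsto_lr_zero.div_const 3)
  norm_num at h3
  exact h3.congr fun x => by ring

lemma integral_lf_Ioi : ∫ x in Ioi (0:ℝ), lf x = π^2/18 + 1/6 := by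
  have hder : IntegrableOn (fun x => lf x - (2/3) * (x * lr x)) (Ioi (0:ℝ)) :=
    integrableOn_lf.sub (integrableOn_xlr.const_mul _)
  have hFTC : ∫ x in Ioi (0:ℝ), (lf x - (2/3) * (x * lr x)) = 0 - lPhi 0 :=
    integral_Ioi_of_hasDerivAt_of_tendsto' (fun x _ => hasDerivAt_lPhi x) hder tendsto_lPhi_zero
  have hPhi0 : lPhi 0 = -(1/6) := by
    rw [lPhi, lr]; norm_num
  have hsplit : ∫ x in Ioi (0:ℝ), lf x
      = (∫ x in Ioi (0:ℝ), (lf x - (2/3) * (x * lr x)))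
        + ∫ x in Ioi (0:ℝ), (2/3) * (x * lr x) := by
    rw [← integral_add hder (integrableOn_xlr.const_mul _)]
    apply setIntegral_congr_fun measurableSet_Ioi
    intro x _; ring
  rw [hsplit, hFTC, hPhi0, MeasureTheory.integral_const_mul, integral_xlr]
  ring

lemma lf_even (x : ℝ) : lf (-x) = lf x := by
  rw [lf, lf, neg_neg]
  have ht : Real.tanh (-x/2) = -Real.tanh (x/2) := by
    rw [show (-x/2 : ℝ) = -(x/2) by ring, Real.tanh_neg]
  rw [ht]
  rw [show (-x * -Real.tanh (x/2) - 1) = (x * Real.tanh (x/2) - 1) by ring]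
  congr 1
  rw [Real.exp_neg]
  have h := Real.exp_pos x
  have h1 : Real.exp x ≠ 0 := h.ne'
  have h2 : 1 + Real.exp x ≠ 0 := by positivity
  field_simp
  ring

lemma integrableOn_lf_Iic : IntegrableOn lf (Iic (0:ℝ)) := by
  have A : MeasurableEmbedding (fun x : ℝ => -x) :=
    (Homeomorph.neg ℝ).isClosedEmbedding.measurableEmbedding
  have h1 : IntegrableOn lf (Ici (0:ℝ)) :=
    Iff.mpr integrableOn_Ici_iff_integrableOn_Ioi integrableOn_lf
  have h2 : IntegrableOn (lf ∘ fun x : ℝ => -x) (Ici (0:ℝ)) := by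
    apply h1.congr_fun _ measurableSet_Ici
    intro x _
    exact (lf_even x).symm
  have hmap : volume.restrict (Iic (0:ℝ))
      = (volume.restrict (Ici (0:ℝ))).map (fun x : ℝ => -x) := by
    rw [← Measure.map_neg_eq_self (volume : Measure ℝ)]
    rw [Measure.restrict_map measurable_neg measurableSet_Iic]
    congr 1
    simp
  rw [IntegrableOn, hmap, A.integrable_map_iff]
  exact h2

theorem logistic_fisher_scale :
    ∫ x : ℝ, (x * Real.tanh (x/2) - 1)^2 * (Real.exp (-x) / (1 + Real.exp (-x))^2) =
      (Real.pi^2 + 3) / 9 := by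
  have hlf : (fun x : ℝ => (x * Real.tanh (x/2) - 1)^2
      * (Real.exp (-x) / (1 + Real.exp (-x))^2)) = lf := rfl
  rw [hlf]
  have hsum := intervalIntegral.integral_Iic_add_Ioi (b := (0:ℝ)) integrableOn_lf_Iic integrableOn_lf
  have hIic : ∫ x in Iic (0:ℝ), lf x = ∫ x in Ioi (0:ℝ), lf x := by
    calc ∫ x in Iic (0:ℝ), lf x = ∫ x in Iic (0:ℝ), lf (-x) :=
          setIntegral_congr_fun measurableSet_Iic (fun x _ => (lf_even x).symm)
      _ = ∫ x in Ioi (-0:ℝ), lf x := integral_comp_neg_Iic 0 lf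
      _ = ∫ x in Ioi (0:ℝ), lf x := by rw [neg_zero]
  rw [← hsum, hIic, integral_lf_Ioi]
  ring
end
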